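/- Let h be a Hermitian form of signature (2n, 2) on ℂ^{2n+2} and a a compatible complex symplectic form (arising as h_ℂ and a_ℂ from the quaternionic form h_ℍ of signature (n,1)). Suppose ℂ^{2n+2} = V ⊕ V·j where V is the i-eigenspace of a right-ℍ-linear complex structure J preserving h_ℍ. Then the restriction of h to V is a non-degenerate Hermitian form of signature (n, 1). -/

import Mathlib

/-- The embedding ℂ → ℍ sending `z` to the quaternion `z.re + z.im·i`. -/
noncomputable def toQ (z : ℂ) : Quaternion ℝ := ⟨z.re, z.im, 0, 0⟩

/-- The quaternion `i`. -/
noncomputable def iq : Quaternion ℝ := ⟨0, 1, 0, 0⟩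

/-- Right multiplication of a vector of `ℍ^{n+1}` by a quaternion. -/
noncomputable def rmul {n : ℕ} (x : Fin (n + 1) → Quaternion ℝ) (q : Quaternion ℝ) :
    Fin (n + 1) → Quaternion ℝ := fun l => x l * q

/-- The quaternionic Hermitian form of signature `(n,1)`. -/
noncomputable def hH (n : ℕ) (X Y : Fin (n + 1) → Quaternion ℝ) : Quaternion ℝ :=
  ∑ l : Fin (n + 1), if (l : ℕ) < n then star (X l) * Y l else -(star (X l) * Y l)

/-- The complex part of a quaternion, so that `h_ℂ = c1 ∘ h_ℍ`. -/
noncomputable def c1 (q : Quaternion ℝ) : ℂ := ⟨q.re, q.imI⟩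

noncomputable def jq : Quaternion ℝ := ⟨0, 0, 1, 0⟩
@[simp] lemma iq_re : iq.re = 0 := rfl
@[simp] lemma iq_imI : iq.imI = 1 := rfl
@[simp] lemma iq_imJ : iq.imJ = 0 := rfl
@[simp] lemma iq_imK : iq.imK = 0 := rfl
@[simp] lemma jq_re : jq.re = 0 := rfl
@[simp] lemma jq_imI : jq.imI = 0 := rfl
@[simp] lemma jq_imJ : jq.imJ = 1 := rfl
@[simp] lemma jq_imK : jq.imK = 0 := rfl

open Quaternion

@[simp] lemma toQ_re (z : ℂ) : (toQ z).re = z.re := rfl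
@[simp] lemma toQ_imI (z : ℂ) : (toQ z).imI = z.im := rfl
@[simp] lemma toQ_imJ (z : ℂ) : (toQ z).imJ = 0 := rfl
@[simp] lemma toQ_imK (z : ℂ) : (toQ z).imK = 0 := rfl
@[simp] lemma c1_re (q : Quaternion ℝ) : (c1 q).re = q.re := rfl
@[simp] lemma c1_im (q : Quaternion ℝ) : (c1 q).im = q.imI := rfl

lemma toQ_add (z w : ℂ) : toQ (z + w) = toQ z + toQ w := by
  ext <;> simp

lemma toQ_mul (z w : ℂ) : toQ (z * w) = toQ z * toQ w := by
  ext <;> simp [Quaternion.re_mul, Quaternion.imI_mul, Quaternion.imJ_mul,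
    Quaternion.imK_mul, Complex.mul_re, Complex.mul_im]

@[simp] lemma toQ_one : toQ 1 = 1 := by ext <;> simp
@[simp] lemma toQ_zero : toQ 0 = 0 := by ext <;> simp

lemma star_toQ (z : ℂ) : star (toQ z) = toQ (starRingEnd ℂ z) := by
  ext <;> simp

@[simp] lemma c1_toQ (z : ℂ) : c1 (toQ z) = z := by apply Complex.ext <;> simp

lemma c1_add (p q : Quaternion ℝ) : c1 (p + q) = c1 p + c1 q := by
  apply Complex.ext <;> simp

lemma c1_neg (q : Quaternion ℝ) : c1 (-q) = - c1 q := by apply Complex.ext <;> simp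

lemma c1_star (q : Quaternion ℝ) : c1 (star q) = starRingEnd ℂ (c1 q) := by
  apply Complex.ext <;> simp

lemma c1_toQ_mul (z : ℂ) (q : Quaternion ℝ) : c1 (toQ z * q) = z * c1 q := by
  apply Complex.ext <;> simp [Quaternion.re_mul, Quaternion.imI_mul, Complex.mul_re, Complex.mul_im]

lemma c1_mul_toQ (q : Quaternion ℝ) (z : ℂ) : c1 (q * toQ z) = c1 q * z := by
  apply Complex.ext <;> simp [Quaternion.re_mul, Quaternion.imI_mul, Complex.mul_re, Complex.mul_im]

@[simp] lemma c1_toQ_mul_jq (z : ℂ) : c1 (toQ z * jq) = 0 := by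
  apply Complex.ext <;> simp [Quaternion.re_mul, Quaternion.imI_mul]

lemma toQ_I : toQ Complex.I = iq := by ext <;> simp

lemma iq_mul_iq : iq * iq = -1 := by
  ext <;> simp [Quaternion.re_mul, Quaternion.imI_mul, Quaternion.imJ_mul, Quaternion.imK_mul]

lemma jq_mul_jq : jq * jq = -1 := by
  ext <;> simp [Quaternion.re_mul, Quaternion.imI_mul, Quaternion.imJ_mul, Quaternion.imK_mul]

lemma toQ_comm (z : ℂ) :
    iq * toQ z = toQ z * iq := by
  ext <;> simp [Quaternion.re_mul, Quaternion.imI_mul, Quaternion.imJ_mul, Quaternion.imK_mul]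

lemma star_iq : star iq = -iq := by ext <;> simp
lemma star_jq : star jq = -jq := by ext <;> simp

-- q commutes with i iff imJ = imK = 0  (used in the form: for V elements)
lemma eq_toQ_c1_of_comm {q : Quaternion ℝ} (h : (-iq) * q * iq = q) : q = toQ (c1 q) := by
  have h2 := congrArg QuaternionAlgebra.imJ h
  have h3 := congrArg QuaternionAlgebra.imK h
  simp [Quaternion.re_mul, Quaternion.imI_mul, Quaternion.imJ_mul, Quaternion.imK_mul] at h2 h3
  ext <;> simp_all
  · linarith
  · linarith

lemma neg_jq_mul_toQ_mul_jq (z : ℂ) : (-jq) * toQ z * jq = toQ (starRingEnd ℂ z) := by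
  ext <;> simp [Quaternion.re_mul, Quaternion.imI_mul, Quaternion.imJ_mul, Quaternion.imK_mul]

noncomputable def kq : Quaternion ℝ := ⟨0, 0, 0, 1⟩
@[simp] lemma kq_re : kq.re = 0 := rfl
@[simp] lemma kq_imI : kq.imI = 0 := rfl
@[simp] lemma kq_imJ : kq.imJ = 0 := rfl
@[simp] lemma kq_imK : kq.imK = 1 := rfl

lemma iq_mul_jq : iq * jq = kq := by
  ext <;> simp [Quaternion.re_mul, Quaternion.imI_mul, Quaternion.imJ_mul,
    Quaternion.imK_mul]
lemma jq_mul_iq : jq * iq = -kq := by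
  ext <;> simp [Quaternion.re_mul, Quaternion.imI_mul, Quaternion.imJ_mul,
    Quaternion.imK_mul]
lemma iq_mul_kq : iq * kq = -jq := by
  ext <;> simp [Quaternion.re_mul, Quaternion.imI_mul, Quaternion.imJ_mul,
    Quaternion.imK_mul]
lemma toQ_real (r : ℝ) : toQ (r : ℂ) = (r : Quaternion ℝ) := by
  ext <;> simp
lemma sub_comm_iq_jq_ne : iq * jq - jq * iq ≠ 0 := by
  rw [iq_mul_jq, jq_mul_iq, sub_neg_eq_add]
  intro h
  have := congrArg QuaternionAlgebra.imK h
  simp at this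
lemma kq_ne_zero : kq ≠ 0 := by
  intro h
  have := congrArg QuaternionAlgebra.imK h
  simp at this
lemma jq_ne_zero : jq ≠ 0 := by
  intro h
  have := congrArg QuaternionAlgebra.imJ h
  simp at this

lemma quat_id1 (a b : Quaternion ℝ) : b - (-a) * iq = (a - b * iq) * iq := by
  ext <;>
    simp [Quaternion.re_mul, Quaternion.imI_mul, Quaternion.imJ_mul, Quaternion.imK_mul] <;>
    ring

lemma quat_id2 (a b : Quaternion ℝ) :
    (b - a * iq) * (-jq) = ((a + b * iq) * (-jq)) * iq := by
  ext <;>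
    simp [Quaternion.re_mul, Quaternion.imI_mul, Quaternion.imJ_mul,
      Quaternion.imK_mul] <;>
    ring

lemma quat_id3 (a : Quaternion ℝ) (r : ℝ) :
    ((a * (-jq)) * toQ (r : ℂ)) * jq = a * toQ (r : ℂ) := by
  ext <;>
    simp [Quaternion.re_mul, Quaternion.imI_mul, Quaternion.imJ_mul,
      Quaternion.imK_mul] <;>
    ring

section Emod

variable {n : ℕ}

abbrev E (n : ℕ) := Fin (n + 1) → Quaternion ℝ

lemma rmul_add (x y : E n) (q : Quaternion ℝ) : rmul (x + y) q = rmul x q + rmul y q := by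
  funext l; simp [rmul, add_mul]

lemma rmul_addq (x : E n) (p q : Quaternion ℝ) : rmul x (p + q) = rmul x p + rmul x q := by
  funext l; simp [rmul, mul_add]

lemma rmul_rmul (x : E n) (p q : Quaternion ℝ) : rmul (rmul x p) q = rmul x (p * q) := by
  funext l; simp [rmul, mul_assoc]

@[simp] lemma rmul_one (x : E n) : rmul x 1 = x := by funext l; simp [rmul]
@[simp] lemma rmul_zero (x : E n) : rmul x 0 = 0 := by funext l; simp [rmul]
@[simp] lemma zero_rmul (q : Quaternion ℝ) : rmul (0 : E n) q = 0 := by funext l; simp [rmul]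

lemma rmul_neg (x : E n) (q : Quaternion ℝ) : rmul x (-q) = -rmul x q := by
  funext l; simp [rmul]

lemma rmul_eq_zero_of_unit (x : E n) (q : Quaternion ℝ) (hq : q ≠ 0)
    (h : rmul x q = 0) : x = 0 := by
  funext l
  have := congrFun h l
  simp only [rmul, Pi.zero_apply] at this ⊢
  rcases mul_eq_zero.1 this with h' | h'
  · exact h'
  · exact absurd h' hq

noncomputable instance : SMul ℂ (E n) := ⟨fun z x => rmul x (toQ z)⟩

lemma smul_def (z : ℂ) (x : E n) : z • x = rmul x (toQ z) := rfl

noncomputable instance : Module ℂ (E n) where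
  one_smul x := by simp [smul_def]
  mul_smul z w x := by
    show rmul x (toQ (z * w)) = rmul (rmul x (toQ w)) (toQ z)
    rw [rmul_rmul, ← toQ_mul, mul_comm]
  smul_zero z := by simp [smul_def]
  smul_add z x y := by simp [smul_def, rmul_add]
  add_smul z w x := by simp [smul_def, toQ_add, rmul_addq]
  zero_smul x := by simp [smul_def]

instance : IsScalarTower ℝ ℂ (E n) := by
  constructor
  intro r z x
  funext l
  show (rmul x (toQ (r • z))) l = r • (rmul x (toQ z)) l
  show (rmul x (toQ ((r : ℂ) * z))) l = r • (rmul x (toQ z)) l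
  have h : toQ ((r : ℂ) * z) = r • toQ z := by ext <;> simp
  simp only [rmul, h, mul_smul_comm, Pi.smul_apply]

instance : FiniteDimensional ℂ (E n) :=
  Module.Finite.of_restrictScalars_finite ℝ ℂ (E n)

end Emod

section more
variable {n : ℕ}
lemma neg_rmul (x : E n) (q : Quaternion ℝ) : rmul (-x) q = -rmul x q := by
  funext l; simp [rmul]
lemma rmul_sub (x y : E n) (q : Quaternion ℝ) : rmul (x - y) q = rmul x q - rmul y q := by
  funext l; simp [rmul, sub_mul]
lemma rmul_subq (x : E n) (p q : Quaternion ℝ) : rmul x (p - q) = rmul x p - rmul x q := by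
  funext l; simp [rmul, mul_sub]
lemma rmul_real_smul (r : ℝ) (x : E n) (q : Quaternion ℝ) :
    rmul (r • x) q = r • rmul x q := by
  funext l; simp [rmul, smul_mul_assoc]
end more

section hHlem

variable {n : ℕ}

open Quaternion

lemma hH_add_left (x y z : E n) : hH n (x + y) z = hH n x z + hH n y z := by
  rw [hH, hH, hH, ← Finset.sum_add_distrib]
  refine Finset.sum_congr rfl fun l _ => ?_
  by_cases h : (l : ℕ) < n <;> simp [h, add_mul] <;> abel

lemma hH_add_right (x y z : E n) : hH n x (y + z) = hH n x y + hH n x z := by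
  rw [hH, hH, hH, ← Finset.sum_add_distrib]
  refine Finset.sum_congr rfl fun l _ => ?_
  by_cases h : (l : ℕ) < n <;> simp [h, mul_add] <;> abel

lemma hH_rmul_left (x y : E n) (q : Quaternion ℝ) :
    hH n (rmul x q) y = star q * hH n x y := by
  rw [hH, hH, Finset.mul_sum]
  refine Finset.sum_congr rfl fun l _ => ?_
  by_cases h : (l : ℕ) < n <;> simp [h, rmul, StarMul.star_mul, mul_assoc]

lemma hH_rmul_right (x y : E n) (q : Quaternion ℝ) :
    hH n x (rmul y q) = hH n x y * q := by
  rw [hH, hH, Finset.sum_mul]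
  refine Finset.sum_congr rfl fun l _ => ?_
  by_cases h : (l : ℕ) < n <;> simp [h, rmul, mul_assoc]

lemma hH_star (x y : E n) : star (hH n x y) = hH n y x := by
  rw [hH, hH, star_sum]
  refine Finset.sum_congr rfl fun l _ => ?_
  by_cases h : (l : ℕ) < n <;> simp [h, StarMul.star_mul]

lemma hH_zero_left (y : E n) : hH n 0 y = 0 := by
  rw [hH]; apply Finset.sum_eq_zero; intro l _; simp

/-- conjugate vector showing nondegeneracy of hH -/
lemma hH_eta (x : E n) :
    hH n x (fun l => if (l : ℕ) < n then x l else -(x l))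
      = ((∑ l, normSq (x l) : ℝ) : Quaternion ℝ) := by
  rw [hH]
  have key : ∀ l : Fin (n + 1),
      (if (l : ℕ) < n then star (x l) * (if (l : ℕ) < n then x l else -(x l))
        else -(star (x l) * (if (l : ℕ) < n then x l else -(x l))))
      = ((normSq (x l) : ℝ) : Quaternion ℝ) := by
    intro l
    by_cases h : (l : ℕ) < n <;> simp [h, star_mul_self]
  rw [Finset.sum_congr rfl fun l _ => key l]
  exact (map_sum (algebraMap ℝ (Quaternion ℝ)) (fun l => normSq (x l)) Finset.univ).symm

lemma hH_nondeg (x : E n)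
    (h : ∀ z : E n, hH n x z = 0) : x = 0 := by
  have h2 := h (fun l => if (l : ℕ) < n then x l else -(x l))
  rw [hH_eta] at h2
  have h3 : (∑ l, normSq (x l) : ℝ) = 0 := by
    exact_mod_cast congrArg QuaternionAlgebra.re h2
  have h4 : ∀ l ∈ Finset.univ, normSq (x l) = 0 := by
    intro l _
    have := Finset.sum_eq_zero_iff_of_nonneg (fun l _ => normSq_nonneg) |>.1 h3
    exact this l (Finset.mem_univ l)
  funext l
  exact normSq_eq_zero.1 (h4 l (Finset.mem_univ l))

lemma q_sum_re {ι : Type*} (s : Finset ι) (f : ι → Quaternion ℝ) :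
    (∑ l ∈ s, f l).re = ∑ l ∈ s, (f l).re :=
  map_sum (AddMonoidHom.mk' (fun q : Quaternion ℝ => q.re) (fun _ _ => rfl)) f s

lemma hH_self_re (x : E n) :
    (hH n x x).re
      = ∑ l : Fin (n + 1), (if (l : ℕ) < n then normSq (x l) else -normSq (x l)) := by
  rw [hH, q_sum_re]
  refine Finset.sum_congr rfl fun l _ => ?_
  by_cases h : (l : ℕ) < n <;> simp [h, star_mul_self]

end hHlem

section GS

open Module

theorem herm_orthobasis (M : Type) [AddCommGroup M] [Module ℂ M] [FiniteDimensional ℂ M]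
    (φ : M → M → ℂ)
    (haddl : ∀ x y z, φ (x + y) z = φ x z + φ y z)
    (hsmull : ∀ (c : ℂ) (x y : M), φ (c • x) y = starRingEnd ℂ c * φ x y)
    (hsmulr : ∀ (c : ℂ) (x y : M), φ x (c • y) = c * φ x y)
    (hconj : ∀ x y, φ y x = starRingEnd ℂ (φ x y))
    (hnd : ∀ x, (∀ y, φ x y = 0) → x = 0) :
    ∃ b : Basis (Fin (finrank ℂ M)) ℂ M,
      (∀ i j, i ≠ j → φ (b i) (b j) = 0) ∧
      (∀ i, φ (b i) (b i) = 1 ∨ φ (b i) (b i) = -1) := by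
  induction' hd : finrank ℂ M with d ih generalizing M
  · exact ⟨basisOfFinrankZero hd, fun i j _ => i.elim0, fun i => i.elim0⟩
  -- derived linearity facts
  have haddr : ∀ x y z : M, φ x (y + z) = φ x y + φ x z := by
    intro x y z
    rw [hconj, haddl, map_add, ← hconj, ← hconj]
  have hzerol : ∀ y : M, φ 0 y = 0 := by
    intro y
    have := hsmull 0 0 y
    simpa using this
  have hzeror : ∀ y : M, φ y 0 = 0 := by
    intro y; rw [hconj, hzerol]; simp
  -- find a vector with nonzero self-pairing
  have hM : Nontrivial M := by
    have : 0 < finrank ℂ M := by omega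
    exact Module.nontrivial_of_finrank_pos this
  obtain ⟨x₀, hx₀⟩ := exists_ne (0 : M)
  have hy : ∃ y, φ x₀ y ≠ 0 := by
    by_contra h
    push_neg at h
    exact hx₀ (hnd x₀ h)
  obtain ⟨y₀, hy₀⟩ := hy
  have hv : ∃ v : M, φ v v ≠ 0 := by
    by_cases h1 : φ x₀ x₀ ≠ 0
    · exact ⟨x₀, h1⟩
    by_cases h2 : φ y₀ y₀ ≠ 0
    · exact ⟨y₀, h2⟩
    push_neg at h1 h2
    by_cases hre : (φ x₀ y₀).re ≠ 0
    · refine ⟨x₀ + y₀, ?_⟩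
      rw [haddl, haddr, haddr, h1, h2, hconj x₀ y₀, zero_add, add_zero, Complex.add_conj]
      intro h
      rw [Complex.ext_iff] at h
      simp at h
      exact hre h
    · push_neg at hre
      have him : (φ x₀ y₀).im ≠ 0 := by
        intro h
        apply hy₀
        rw [Complex.ext_iff]
        exact ⟨by simpa using hre, by simpa using h⟩
      refine ⟨x₀ + Complex.I • y₀, ?_⟩
      rw [haddl, haddr, haddr]
      simp only [hsmull, hsmulr, h1, h2, mul_zero, zero_mul, zero_add, add_zero, hconj x₀ y₀]
      intro hcon
      apply him
      have hre2 := congrArg Complex.re hcon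
      simp [Complex.mul_re] at hre2
      linarith
  obtain ⟨v, hvv⟩ := hv
  -- self pairing is real
  have treal : ∀ x : M, ((φ x x).re : ℂ) = φ x x := by
    intro x
    have h := congrArg Complex.im (hconj x x)
    simp at h
    have him : (φ x x).im = 0 := by linarith
    rw [Complex.ext_iff]
    simp [him]
  -- normalize
  set t : ℝ := (φ v v).re with ht
  have htne : t ≠ 0 := by
    intro h
    apply hvv
    rw [← treal v, ← ht, h]; simp
  set s : ℝ := Real.sqrt |t| with hs
  have hspos : 0 < s := Real.sqrt_pos.2 (abs_pos.2 htne)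
  have hss : s * s = |t| := Real.mul_self_sqrt (abs_nonneg t)
  set u : M := ((s⁻¹ : ℝ) : ℂ) • v with hu
  have huu : φ u u = ((t / |t| : ℝ) : ℂ) := by
    rw [hu, hsmull, hsmulr, ← treal v, ← ht, Complex.conj_ofReal, ← hss]
    norm_cast
    try field_simp
    try ring
  have huu1 : φ u u = 1 ∨ φ u u = -1 := by
    rcases lt_or_gt_of_ne htne with h | h
    · right
      rw [huu, abs_of_neg h, div_neg, div_self htne]
      norm_num
    · left
      rw [huu, abs_of_pos h, div_self htne]
      norm_num
  have hune : φ u u ≠ 0 := by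
    rcases huu1 with h | h <;> rw [h] <;> norm_num
  have hu0 : u ≠ 0 := by
    intro h
    apply hune
    rw [h, hzerol]
  -- orthogonal complement
  set W : Submodule ℂ M :=
    { carrier := {y | φ u y = 0}
      add_mem' := by
        intro a b ha hb
        simp only [Set.mem_setOf_eq] at *
        rw [haddr, ha, hb, add_zero]
      zero_mem' := hzeror u
      smul_mem' := by
        intro c a ha
        simp only [Set.mem_setOf_eq] at *
        rw [hsmulr, ha, mul_zero] }
    with hW
  have memW : ∀ y : M, y ∈ W ↔ φ u y = 0 := fun y => Iff.rfl
  -- decomposition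
  have hdecomp : ∀ z : M, z + (-(φ u z / φ u u)) • u ∈ W := by
    intro z
    rw [memW, haddr, hsmulr]
    field_simp
    ring
  have hcompl : IsCompl (ℂ ∙ u) W := by
    constructor
    · rw [Submodule.disjoint_def]
      intro x hx hxW
      obtain ⟨c, rfl⟩ := Submodule.mem_span_singleton.1 hx
      rw [memW, hsmulr] at hxW
      rcases mul_eq_zero.1 hxW with h | h
      · rw [h, zero_smul]
      · exact absurd h hune
    · rw [codisjoint_iff, eq_top_iff]
      intro z _
      have hz : z = (φ u z / φ u u) • u + (z + (-(φ u z / φ u u)) • u) := by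
        rw [neg_smul]; abel
      rw [hz]
      exact Submodule.add_mem _
        (Submodule.mem_sup_left (Submodule.smul_mem _ _ (Submodule.mem_span_singleton_self u)))
        (Submodule.mem_sup_right (hdecomp z))
  have hWrank : finrank ℂ W = d := by
    have h1 := Submodule.finrank_add_eq_of_isCompl hcompl
    rw [finrank_span_singleton hu0, hd] at h1
    omega
  -- restricted form
  set φ' : W → W → ℂ := fun a b => φ (a : M) (b : M) with hφ'
  have hnd' : ∀ x : W, (∀ y : W, φ' x y = 0) → x = 0 := by
    intro x hx
    have hxu : φ (x : M) u = 0 := by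
      rw [hconj, (memW (x : M)).1 x.2]; simp
    have hall : ∀ y : M, φ (x : M) y = 0 := by
      intro y
      obtain ⟨a, ha, b, hb, rfl⟩ := Submodule.mem_sup.1
        (by rw [hcompl.sup_eq_top]; trivial : y ∈ (ℂ ∙ u) ⊔ W)
      obtain ⟨c, rfl⟩ := Submodule.mem_span_singleton.1 ha
      rw [haddr, hsmulr, hxu, mul_zero, zero_add]
      exact hx ⟨b, hb⟩
    exact Subtype.ext (hnd (x : M) hall)
  obtain ⟨b', hb'o, hb'n⟩ := ih W φ'
    (fun x y z => haddl x y z)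
    (fun c x y => hsmull c x y)
    (fun c x y => hsmulr c x y)
    (fun x y => hconj (x : M) (y : M))
    hnd' hWrank
  -- assemble basis
  have hli : ∀ (c : ℂ), ∀ x ∈ W, c • u + x = 0 → c = 0 := by
    intro c x hx hcx
    have h0 : φ u (c • u + x) = 0 := by rw [hcx, hzeror]
    rw [haddr, hsmulr, (memW x).1 hx, add_zero] at h0
    rcases mul_eq_zero.1 h0 with h | h
    · exact h
    · exact absurd h hune
  have hsp : ∀ z : M, ∃ c : ℂ, z + c • u ∈ W := fun z => ⟨-(φ u z / φ u u), hdecomp z⟩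
  let b := Basis.mkFinCons u b' hli hsp
  have hbc : (b : Fin (d + 1) → M) = Fin.cons u ((W.subtype) ∘ b') :=
    Basis.coe_mkFinCons u b' hli hsp
  refine ⟨b, ?_, ?_⟩
  · intro i j
    rw [hbc]
    refine Fin.cases ?_ (fun i' => ?_) i <;> refine Fin.cases ?_ (fun j' => ?_) j <;>
      intro hij <;>
      simp only [Fin.cons_zero, Fin.cons_succ, Function.comp_apply, Submodule.subtype_apply]
    · exact absurd rfl hij
    · exact (memW _).1 (b' j').2
    · rw [hconj, (memW _).1 (b' i').2]; simp
    · exact hb'o i' j' (fun h => hij (congrArg Fin.succ h))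
  · intro i
    rw [hbc]
    refine Fin.cases ?_ (fun i' => ?_) i
    · simpa using huu1
    · simpa using hb'n i'

end GS

section phi

variable {n : ℕ}

noncomputable def phi (n : ℕ) (x y : E n) : ℂ := c1 (hH n x y)

lemma phi_addl (x y z : E n) : phi n (x + y) z = phi n x z + phi n y z := by
  rw [phi, phi, phi, hH_add_left, c1_add]

lemma phi_addr (x y z : E n) : phi n x (y + z) = phi n x y + phi n x z := by
  rw [phi, phi, phi, hH_add_right, c1_add]

lemma phi_smull (c : ℂ) (x y : E n) : phi n (c • x) y = starRingEnd ℂ c * phi n x y := by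
  rw [phi, phi, smul_def, hH_rmul_left, star_toQ, c1_toQ_mul]

lemma phi_smulr (c : ℂ) (x y : E n) : phi n x (c • y) = c * phi n x y := by
  rw [phi, phi, smul_def, hH_rmul_right]
  have : hH n x y * toQ c = toQ c * hH n x y → True := fun _ => trivial
  rw [c1_mul_toQ, mul_comm]

lemma phi_conj (x y : E n) : phi n y x = starRingEnd ℂ (phi n x y) := by
  rw [phi, phi, ← hH_star, c1_star]

/-- the bundled sesquilinear version of `phi` -/
noncomputable def Phi (n : ℕ) : (E n) →ₛₗ[starRingEnd ℂ] (E n) →ₗ[ℂ] ℂ :=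
  LinearMap.mk₂'ₛₗ (starRingEnd ℂ) (RingHom.id ℂ) (phi n)
    phi_addl (fun c x y => by rw [phi_smull]; rfl)
    phi_addr (fun c x y => by rw [phi_smulr]; rfl)

lemma Phi_apply (x y : E n) : Phi n x y = phi n x y := rfl

lemma phi_diag {ι : Type} [Fintype ι] [DecidableEq ι] (u : ι → E n) (eps : ι → ℂ)
    (G : ∀ s t, phi n (u s) (u t) = if s = t then eps s else 0) (c : ι → ℂ) :
    phi n (∑ t, c t • u t) (∑ t, c t • u t)
      = ∑ t, starRingEnd ℂ (c t) * c t * eps t := by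
  have h0 : (Phi n) (∑ t, c t • u t) = ∑ s, (starRingEnd ℂ) (c s) • (Phi n) (u s) := by
    rw [map_sum]
    exact Finset.sum_congr rfl fun s _ => by rw [map_smulₛₗ]
  have h1 : phi n (∑ t, c t • u t) (∑ t, c t • u t)
      = ∑ s, ∑ t, starRingEnd ℂ (c s) * (c t * phi n (u s) (u t)) := by
    rw [← Phi_apply, h0, LinearMap.sum_apply]
    refine Finset.sum_congr rfl fun s _ => ?_
    rw [LinearMap.smul_apply, map_sum, smul_eq_mul, Finset.mul_sum]
    refine Finset.sum_congr rfl fun t _ => ?_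
    rw [map_smul, smul_eq_mul, Phi_apply]
  rw [h1]
  refine Finset.sum_congr rfl fun s _ => ?_
  rw [Finset.sum_eq_single s]
  · rw [G s s]; simp; ring
  · intro t _ hts
    rw [G s t, if_neg (Ne.symm hts)]
    simp
  · intro h; exact absurd (Finset.mem_univ s) h

lemma phi_rmul_jq_right (v w : E n) (h : hH n v w = toQ (phi n v w)) :
    phi n v (rmul w jq) = 0 := by
  rw [phi, hH_rmul_right, h, c1_toQ_mul_jq]

lemma phi_rmul_jq_left (v w : E n) (h : hH n w v = toQ (phi n w v)) :
    phi n (rmul v jq) w = 0 := by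
  rw [phi_conj, phi_rmul_jq_right w v h]
  simp

lemma phi_rmul_jq_both (v w : E n) (h : hH n v w = toQ (phi n v w)) :
    phi n (rmul v jq) (rmul w jq) = starRingEnd ℂ (phi n v w) := by
  rw [phi, hH_rmul_left, hH_rmul_right, star_jq, h]
  rw [← mul_assoc, neg_jq_mul_toQ_mul_jq, c1_toQ]

lemma phi_self_re (x : E n) : (phi n x x).re = (hH n x x).re := rfl

lemma phi_self_re_nonneg_of_lastzero (x : E n) (h : x (Fin.last n) = 0) :
    0 ≤ (phi n x x).re := by
  rw [phi_self_re, hH_self_re]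
  apply Finset.sum_nonneg
  intro l _
  by_cases hl : (l : ℕ) < n
  · simp [hl, Quaternion.normSq_nonneg]
  · have : l = Fin.last n := by
      apply Fin.ext
      have := l.isLt
      simp [Fin.last]
      omega
    rw [if_neg hl, this, h]
    simp

/-- the standard negative vector -/
lemma phi_neg_vector :
    phi n (fun l => if l = Fin.last n then 1 else 0) (fun l => if l = Fin.last n then 1 else 0)
      = -1 := by
  rw [phi, hH]
  rw [Finset.sum_eq_single (Fin.last n)]
  · simp [Fin.last]
    apply Complex.ext <;> simp
  · intro l _ hl
    simp [hl]
  · intro h; exact absurd (Finset.mem_univ _) h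

end phi

set_option maxHeartbeats 1000000 in
open Module in
/-- Let `J` be a right `ℍ`-linear complex structure on `ℍ^{n+1}` preserving the quaternionic
Hermitian form `h_ℍ` of signature `(n,1)`, and let `V` be its `i`-eigenspace.  Then the
restriction of `h_ℂ` to `V` is a non-degenerate Hermitian form of signature `(n,1)`: `V` has
a complex basis `f_0, …, f_n` that is `h_ℂ`-orthonormal with `n` plus signs and one minus
sign. -/
theorem restriction_signature (n : ℕ)
    (J : (Fin (n + 1) → Quaternion ℝ) → (Fin (n + 1) → Quaternion ℝ))
    (hadd : ∀ x y, J (x + y) = J x + J y)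
    (hlin : ∀ x q, J (rmul x q) = rmul (J x) q)
    (hsq : ∀ x, J (J x) = -x)
    (hpres : ∀ x y, hH n (J x) (J y) = hH n x y) :
    ∃ f : Fin (n + 1) → (Fin (n + 1) → Quaternion ℝ),
      (∀ k, J (f k) = rmul (f k) iq) ∧
      (∀ v, J v = rmul v iq →
        ∃! c : Fin (n + 1) → ℂ, v = ∑ k, rmul (f k) (toQ (c k))) ∧
      (∀ k l, c1 (hH n (f k) (f l))
        = if k = l then (if (k : ℕ) < n then 1 else -1) else 0) := by
  classical
  -- basic facts about J
  have J0 : J 0 = 0 := by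
    have h := hadd 0 0
    rw [add_zero] at h
    exact (left_eq_add.1 h)
  have Jneg : ∀ x, J (-x) = -J x := by
    intro x
    have h := hadd x (-x)
    rw [add_neg_cancel, J0] at h
    exact (neg_eq_of_add_eq_zero_right h.symm).symm
  have Jsub : ∀ x y, J (x - y) = J x - J y := by
    intro x y
    rw [sub_eq_add_neg, hadd, Jneg, sub_eq_add_neg]
  -- the i-eigenspace V as a complex submodule
  set V : Submodule ℂ (E n) :=
    { carrier := {x | J x = rmul x iq}
      add_mem' := by
        intro a b ha hb
        simp only [Set.mem_setOf_eq] at *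
        rw [hadd, ha, hb, rmul_add]
      zero_mem' := by
        simp only [Set.mem_setOf_eq]
        rw [J0]
        funext l
        simp [rmul]
      smul_mem' := by
        intro c a ha
        have ha' : J a = rmul a iq := ha
        show J (c • a) = rmul (c • a) iq
        rw [smul_def, hlin, ha', rmul_rmul, rmul_rmul, toQ_comm] }
    with hV
  have memV : ∀ x : E n, x ∈ V ↔ J x = rmul x iq := fun x => Iff.rfl
  -- hH takes complex values on V
  have hHtoQ : ∀ v w : E n, v ∈ V → w ∈ V → hH n v w = toQ (phi n v w) := by
    intro v w hv hw
    apply eq_toQ_c1_of_comm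
    have h := hpres v w
    rw [(memV v).1 hv, (memV w).1 hw, hH_rmul_left, hH_rmul_right, star_iq, ← mul_assoc] at h
    exact h
  -- decomposition E = V ⊕ V·j
  have decomp : ∀ z : E n, ∃ v w : E n, v ∈ V ∧ w ∈ V ∧ z = v + rmul w jq := by
    intro z
    set P : E n := z - rmul (J z) iq with hP
    set Q : E n := z + rmul (J z) iq with hQ
    have hPV : P ∈ V := by
      rw [memV, hP, Jsub, hlin, hsq]
      funext l
      exact quat_id1 (z l) (J z l)
    have hQV : rmul Q (-jq) ∈ V := by
      rw [memV, hlin]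
      have hJQ : J Q = J z - rmul z iq := by
        rw [hQ, hadd, hlin, hsq, neg_rmul, ← sub_eq_add_neg]
      rw [hJQ, hQ]
      funext l
      exact quat_id2 (z l) (J z l)
    refine ⟨(((1:ℝ)/2 : ℝ) : ℂ) • P, (((1:ℝ)/2 : ℝ) : ℂ) • (rmul Q (-jq)),
      V.smul_mem _ hPV, V.smul_mem _ hQV, ?_⟩
    have key : rmul ((((1:ℝ)/2 : ℝ) : ℂ) • (rmul Q (-jq))) jq = (((1:ℝ)/2 : ℝ) : ℂ) • Q := by
      funext l
      exact quat_id3 (Q l) ((1:ℝ)/2)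
    rw [key, ← smul_add]
    have hPQ : P + Q = z + z := by rw [hP, hQ]; abel
    rw [hPQ, smul_add, ← add_smul]
    have : ((((1:ℝ)/2 : ℝ) : ℂ) + (((1:ℝ)/2 : ℝ) : ℂ)) = 1 := by norm_num
    rw [this, one_smul]
  -- nondegeneracy of phi on V
  have nondeg : ∀ x : E n, x ∈ V → (∀ y : E n, y ∈ V → phi n x y = 0) → x = 0 := by
    intro x hx h0
    apply hH_nondeg
    intro z
    obtain ⟨v, w, hv, hw, rfl⟩ := decomp z
    rw [hH_add_right, hH_rmul_right, hHtoQ x v hx hv, hHtoQ x w hx hw, h0 v hv, h0 w hw]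
    simp
  -- the restricted form on V
  set phiV : ↥V → ↥V → ℂ := fun a b => phi n (a : E n) (b : E n) with hphiV
  obtain ⟨b, hbo, hbn⟩ := herm_orthobasis ↥V phiV
    (by intro x y z; show phi n ((x : E n) + y) z = _; rw [phi_addl])
    (by intro c x y; show phi n (c • (x : E n)) y = _; rw [phi_smull])
    (by intro c x y; show phi n (x : E n) (c • (y : E n)) = _; rw [phi_smulr])
    (fun x y => phi_conj _ _)
    (by
      intro x hx
      apply Subtype.ext
      exact nondeg (x : E n) x.2 (fun y hy => hx ⟨y, hy⟩))
  -- the coercion of a sum from V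
  have coe_sum : ∀ {ι : Type} [Fintype ι] (c : ι → ℂ) (u : ι → ↥V),
      ((∑ i, c i • u i : ↥V) : E n) = ∑ i, c i • (u i : E n) := by
    intro ι _ c u
    exact map_sum (V.subtype) (fun i => c i • u i) Finset.univ |>.trans
      (Finset.sum_congr rfl fun i _ => by simp)
  -- m = n + 1 via real ranks
  have hm : finrank ℂ ↥V = n + 1 := by
    set Vr : Submodule ℝ (E n) := V.restrictScalars ℝ with hVr
    set ρ : E n ≃ₗ[ℝ] E n :=
      { toFun := fun x => rmul x jq
        invFun := fun x => rmul x (-jq)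
        map_add' := fun x y => rmul_add x y jq
        map_smul' := fun r x => rmul_real_smul r x jq
        left_inv := by
          intro x
          show rmul (rmul x jq) (-jq) = x
          rw [rmul_rmul]
          have : jq * (-jq) = 1 := by rw [mul_neg, jq_mul_jq, neg_neg]
          rw [this, rmul_one]
        right_inv := by
          intro x
          show rmul (rmul x (-jq)) jq = x
          rw [rmul_rmul]
          have : -jq * jq = 1 := by rw [neg_mul, jq_mul_jq, neg_neg]
          rw [this, rmul_one] }
      with hρ
    set Vj : Submodule ℝ (E n) := Vr.map (ρ : E n →ₗ[ℝ] E n) with hVj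
    have hsup : Vr ⊔ Vj = ⊤ := by
      rw [eq_top_iff]
      intro z _
      obtain ⟨v, w, hv, hw, rfl⟩ := decomp z
      exact Submodule.add_mem _ (Submodule.mem_sup_left hv)
        (Submodule.mem_sup_right ⟨w, hw, rfl⟩)
    have hinf : Vr ⊓ Vj = ⊥ := by
      rw [eq_bot_iff]
      rintro x ⟨hx1, hx2⟩
      obtain ⟨y, hy, rfl⟩ := hx2
      have hyV : y ∈ V := hy
      have hxV : rmul y jq ∈ V := hx1
      have e1 : J (rmul y jq) = rmul y (iq * jq) := by
        rw [hlin, (memV y).1 hyV, rmul_rmul]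
      have e2 : J (rmul y jq) = rmul y (jq * iq) := by
        rw [(memV _).1 hxV, rmul_rmul]
      have e3 : rmul y (iq * jq - jq * iq) = 0 := by
        rw [rmul_subq, ← e1, ← e2, sub_self]
      have : y = 0 := rmul_eq_zero_of_unit y _ sub_comm_iq_jq_ne e3
      rw [this]
      simp [Submodule.mem_bot]
    have hVjrank : finrank ℝ ↥Vj = finrank ℝ ↥Vr := LinearEquiv.finrank_map_eq ρ Vr
    have hVrrank : finrank ℝ ↥Vr = 2 * finrank ℂ ↥V := by
      have e1 : finrank ℝ ↥Vr = finrank ℝ ↥V :=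
        LinearEquiv.finrank_eq ((Submodule.restrictScalarsEquiv ℝ ℂ (E n) V).restrictScalars ℝ)
      have e2 : finrank ℝ ℂ * finrank ℂ ↥V = finrank ℝ ↥V :=
        Module.finrank_mul_finrank ℝ ℂ ↥V
      rw [Complex.finrank_real_complex] at e2
      omega
    have hEfull : finrank ℝ (E n) = 4 * (n + 1) := by
      rw [Module.finrank_pi_fintype ℝ]
      simp [Quaternion.finrank_eq_four]
      ring
    have hsum := Submodule.finrank_sup_add_finrank_inf_eq Vr Vj
    rw [hsup, hinf, finrank_top, finrank_bot, hEfull, hVjrank, hVrrank] at hsum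
    omega
  -- there is at least one negative basis vector
  have negA : ∃ i, phiV (b i) (b i) = -1 := by
    by_contra hno
    push_neg at hno
    have hall : ∀ i, phiV (b i) (b i) = 1 := fun i => (hbn i).resolve_right (hno i)
    have hVpos : ∀ v : ↥V, 0 ≤ (phi n (v : E n) (v : E n)).re := by
      intro v
      have hrepr : (v : E n) = ∑ i, (b.repr v i) • ((b i : E n)) := by
        conv_lhs => rw [← b.sum_repr v]
        exact coe_sum _ _
      rw [hrepr, phi_diag (fun i => (b i : E n)) (fun _ => 1)
        (fun s t => by
          by_cases hst : s = t
          · rw [hst, if_pos rfl]; exact hall t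
          · rw [if_neg hst]; exact hbo s t hst) _]
      have hterm : ∀ t, starRingEnd ℂ (b.repr v t) * (b.repr v t) * 1
          = ((Complex.normSq (b.repr v t) : ℝ) : ℂ) := by
        intro t
        rw [mul_one, mul_comm, Complex.mul_conj]
      rw [Finset.sum_congr rfl fun t _ => hterm t]
      rw [show (∑ t, ((Complex.normSq (b.repr v t) : ℝ) : ℂ))
          = ((∑ t, Complex.normSq (b.repr v t) : ℝ) : ℂ) by push_cast; ring]
      rw [Complex.ofReal_re]
      exact Finset.sum_nonneg fun t _ => Complex.normSq_nonneg _
    have hEpos : ∀ x : E n, 0 ≤ (phi n x x).re := by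
      intro x
      obtain ⟨v, w, hv, hw, rfl⟩ := decomp x
      rw [phi_addl, phi_addr, phi_addr,
        phi_rmul_jq_right v w (hHtoQ v w hv hw),
        phi_rmul_jq_left w v (hHtoQ v w hv hw),
        phi_rmul_jq_both w w (hHtoQ w w hw hw)]
      simp only [add_zero, zero_add, Complex.add_re, Complex.conj_re]
      exact add_nonneg (hVpos ⟨v, hv⟩) (hVpos ⟨w, hw⟩)
    have hbad := hEpos (fun l => if l = Fin.last n then 1 else 0)
    rw [phi_neg_vector] at hbad
    norm_num at hbad
  -- there is at most one negative basis vector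
  have negB : ∀ i j, phiV (b i) (b i) = -1 → phiV (b j) (b j) = -1 → i = j := by
    intro i j hi hj
    by_contra hij
    set u4 : Fin 4 → E n :=
      ![(b i : E n), (b j : E n), rmul (b i : E n) jq, rmul (b j : E n) jq] with hu4
    have hij0 : phi n (b i : E n) (b j : E n) = 0 := hbo i j hij
    have hji0 : phi n (b j : E n) (b i : E n) = 0 := hbo j i (Ne.symm hij)
    have hG : ∀ s t, phi n (u4 s) (u4 t) = if s = t then -1 else 0 := by
      intro s t
      fin_cases s <;> fin_cases t <;>
        simp only [hu4, Matrix.cons_val_zero, Matrix.cons_val_one, Matrix.head_cons,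
          Matrix.cons_val', Matrix.cons_val_fin_one, Matrix.empty_val',
          Fin.mk_zero, Fin.mk_one, Fin.isValue] <;>
        norm_num
      · exact hi
      · exact hij0
      · exact phi_rmul_jq_right _ _ (hHtoQ _ _ (b i).2 (b i).2)
      · exact phi_rmul_jq_right _ _ (hHtoQ _ _ (b i).2 (b j).2)
      · exact hji0
      · exact hj
      · exact phi_rmul_jq_right _ _ (hHtoQ _ _ (b j).2 (b i).2)
      · exact phi_rmul_jq_right _ _ (hHtoQ _ _ (b j).2 (b j).2)
      · exact phi_rmul_jq_left _ _ (hHtoQ _ _ (b i).2 (b i).2)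
      · exact phi_rmul_jq_left _ _ (hHtoQ _ _ (b j).2 (b i).2)
      · rw [phi_rmul_jq_both _ _ (hHtoQ _ _ (b i).2 (b i).2)]
        rw [show phi n (b i : E n) (b i : E n) = -1 from hi]
        simp
      · rw [phi_rmul_jq_both _ _ (hHtoQ _ _ (b i).2 (b j).2), hij0]; simp
      · exact phi_rmul_jq_left _ _ (hHtoQ _ _ (b i).2 (b j).2)
      · exact phi_rmul_jq_left _ _ (hHtoQ _ _ (b j).2 (b j).2)
      · rw [phi_rmul_jq_both _ _ (hHtoQ _ _ (b j).2 (b i).2), hji0]; simp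
      · rw [phi_rmul_jq_both _ _ (hHtoQ _ _ (b j).2 (b j).2)]
        rw [show phi n (b j : E n) (b j : E n) = -1 from hj]
        simp
    set T : (Fin 4 → ℂ) →ₗ[ℝ] Quaternion ℝ :=
      { toFun := fun c => (∑ t, c t • u4 t) (Fin.last n)
        map_add' := by
          intro c d
          show (∑ t, ((c + d) t) • u4 t) (Fin.last n)
              = (∑ t, c t • u4 t) (Fin.last n) + (∑ t, d t • u4 t) (Fin.last n)
          have h : (∑ t, ((c + d) t) • u4 t) = (∑ t, c t • u4 t) + (∑ t, d t • u4 t) := by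
            rw [← Finset.sum_add_distrib]
            exact Finset.sum_congr rfl fun t _ => by rw [Pi.add_apply, add_smul]
          rw [h]
          rfl
        map_smul' := by
          intro r c
          show (∑ t, ((r • c) t) • u4 t) (Fin.last n)
              = r • ((∑ t, c t • u4 t) (Fin.last n))
          have h : (∑ t, ((r • c) t) • u4 t) = r • (∑ t, c t • u4 t) := by
            rw [Finset.smul_sum]
            exact Finset.sum_congr rfl fun t _ => by rw [Pi.smul_apply, smul_assoc]
          rw [h]
          rfl }
      with hT
    have hTzero : ∀ e : Fin 4 → ℂ, T e = 0 → e = 0 := by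
      intro ee he
      rw [hT] at he
      simp only [LinearMap.coe_mk, AddHom.coe_mk] at he
      have hxlast : (∑ t, ee t • u4 t) (Fin.last n) = 0 := he
      have h1 : 0 ≤ (phi n (∑ t, ee t • u4 t) (∑ t, ee t • u4 t)).re :=
        phi_self_re_nonneg_of_lastzero _ hxlast
      rw [phi_diag u4 (fun _ => -1) hG ee] at h1
      have hterm : ∀ t, starRingEnd ℂ (ee t) * ee t * (-1)
          = -((Complex.normSq (ee t) : ℝ) : ℂ) := by
        intro t
        rw [mul_comm (starRingEnd ℂ (ee t)) (ee t), Complex.mul_conj]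
        ring
      rw [Finset.sum_congr rfl fun t _ => hterm t] at h1
      rw [show (∑ t, -((Complex.normSq (ee t) : ℝ) : ℂ))
          = ((∑ t, -Complex.normSq (ee t) : ℝ) : ℂ) by push_cast; ring] at h1
      rw [Complex.ofReal_re] at h1
      have h2 : (∑ t, Complex.normSq (ee t)) ≤ 0 := by
        have h5 : (∑ t, -Complex.normSq (ee t)) = -(∑ t, Complex.normSq (ee t)) :=
          Finset.sum_neg_distrib _
        rw [h5] at h1
        linarith
      have h3 : (∑ t, Complex.normSq (ee t)) = 0 :=
        le_antisymm h2 (Finset.sum_nonneg fun t _ => Complex.normSq_nonneg _)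
      have h4 := (Finset.sum_eq_zero_iff_of_nonneg
        (fun t _ => Complex.normSq_nonneg (ee t))).1 h3
      funext t
      exact Complex.normSq_eq_zero.1 (h4 t (Finset.mem_univ t))
    have hTinj : Function.Injective T := by
      intro c d hcd
      have : T (c - d) = 0 := by rw [map_sub, hcd, sub_self]
      have := hTzero _ this
      exact sub_eq_zero.1 this
    have hfr : finrank ℝ (Fin 4 → ℂ) ≤ finrank ℝ (Quaternion ℝ) :=
      LinearMap.finrank_le_finrank_of_injective hTinj
    rw [Quaternion.finrank_eq_four] at hfr
    have h8 : finrank ℝ (Fin 4 → ℂ) = 8 := by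
      rw [Module.finrank_pi_fintype ℝ]
      simp [Complex.finrank_real_complex]
    omega
  obtain ⟨i₀, hi₀⟩ := negA
  -- reindex the basis so that the negative vector is last
  set i₀' : Fin (n + 1) := finCongr hm i₀ with hi₀'
  set e : Fin (finrank ℂ ↥V) ≃ Fin (n + 1) :=
    (finCongr hm).trans (Equiv.swap (Fin.last n) i₀') with he
  set B : Basis (Fin (n + 1)) ℂ ↥V := b.reindex e with hB
  set g : Fin (n + 1) → Fin (finrank ℂ ↥V) := fun k => e.symm k with hg
  have hBg : ∀ k, B k = b (g k) := fun k => b.reindex_apply e k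
  have hglast : g (Fin.last n) = i₀ := by
    rw [hg]
    show e.symm (Fin.last n) = i₀
    rw [he, Equiv.symm_trans_apply, Equiv.symm_swap, Equiv.swap_apply_left]
    simp [hi₀']
  have hginj : Function.Injective g := fun a b' hab => e.symm.injective hab
  have sign : ∀ k, phiV (B k) (B k) = if (k : ℕ) < n then 1 else -1 := by
    intro k
    by_cases hk : k = Fin.last n
    · subst hk
      rw [if_neg (by simp [Fin.last]), hBg, hglast]
      exact hi₀
    · have h1 : (k : ℕ) < n := by
        have h2 := k.isLt
        have h3 : (k : ℕ) ≠ n := fun hc => hk (Fin.ext (by simp [Fin.last, hc]))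
        omega
      rw [if_pos h1, hBg]
      rcases hbn (g k) with h | h
      · exact h
      · exact absurd (negB _ _ h hi₀) (fun hc => hk (hginj (hc.trans hglast.symm)))
  have orthB : ∀ k l, k ≠ l → phiV (B k) (B l) = 0 := by
    intro k l hkl
    rw [hBg, hBg]
    exact hbo _ _ (fun hc => hkl (hginj hc))
  -- final assembly
  refine ⟨fun k => (B k : E n), fun k => (memV _).1 (B k).2, ?_, ?_⟩
  · intro v hv
    have hvV : v ∈ V := (memV v).2 hv
    refine ⟨fun k => B.repr ⟨v, hvV⟩ k, ?_, ?_⟩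
    · show v = ∑ k, rmul ((B k : E n)) (toQ (B.repr ⟨v, hvV⟩ k))
      have h1 : v = ((∑ k, B.repr ⟨v, hvV⟩ k • B k : ↥V) : E n) := by
        rw [B.sum_repr ⟨v, hvV⟩]
      refine h1.trans ?_
      rw [coe_sum]
      exact rfl
    · intro c' hc'
      have h2 : (⟨v, hvV⟩ : ↥V) = ∑ k, c' k • B k := by
        apply Subtype.ext
        rw [coe_sum]
        exact hc'
      funext k
      rw [h2, B.repr_sum_self]
  · intro k l
    show phi n (B k : E n) (B l : E n) = _
    by_cases hkl : k = l
    · subst hkl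
      rw [if_pos rfl]
      exact sign k
    · rw [if_neg hkl]
      exact orthB k l hkl
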